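/- Suppose Ψ = (ψ_1,…,ψ_n) with each ψ_k ∈ ℂ^m satisfies M(z)Ψ = 0 for a nonzero complex number z. Then the transfer matrix T satisfies the eigenvalue equation T · (ψ_1, z⁻¹ψ_n)ᵀ = z · (ψ_1, z⁻¹ψ_n)ᵀ, where (ψ_1, z⁻¹ψ_n)ᵀ denotes the vector in ℂ^{2m} with first m components ψ_1 and last m components z⁻¹ψ_n. -/
import Mathlib


open Matrix

/-- The transfer matrix `T(k) = E_k ⋯ E_1` where
`E_i = [[-B_i⁻¹ A_i, -B_i⁻¹ C_{i-1}], [I_m, 0]]`. -/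
noncomputable def transfer (m : ℕ) (A B C : ℕ → Matrix (Fin m) (Fin m) ℂ) :
    ℕ → Matrix (Fin m ⊕ Fin m) (Fin m ⊕ Fin m) ℂ
  | 0 => 1
  | k + 1 =>
      Matrix.fromBlocks (-(B (k + 1))⁻¹ * A (k + 1)) (-(B (k + 1))⁻¹ * C k) 1 0 *
        transfer m A B C k

/-- The `nm × nm` block tridiagonal matrix `M(z)` with diagonal blocks `A_1, …, A_n`,
superdiagonal blocks `B_1, …, B_{n-1}`, subdiagonal blocks `C_1, …, C_{n-1}`,
corner block `z⁻¹ C_0` in block position `(1, n)` and corner block `z B_n` in block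
position `(n, 1)`.  Block row/column indices are `0`-based (`i : Fin n` codes the
paper's index `i+1`). -/
noncomputable def cornerMat (m n : ℕ) (z : ℂ) (A B C : ℕ → Matrix (Fin m) (Fin m) ℂ) :
    Matrix (Fin n × Fin m) (Fin n × Fin m) ℂ :=
  fun p q =>
    (if (p.1 : ℕ) = q.1 then A (p.1 + 1) p.2 q.2 else 0) +
    (if (q.1 : ℕ) = p.1 + 1 then B (p.1 + 1) p.2 q.2 else 0) +
    (if (p.1 : ℕ) = q.1 + 1 then C p.1 p.2 q.2 else 0) +
    (if (p.1 : ℕ) = 0 ∧ (q.1 : ℕ) = n - 1 then z⁻¹ * C 0 p.2 q.2 else 0) +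
    (if (p.1 : ℕ) = n - 1 ∧ (q.1 : ℕ) = 0 then z * B n p.2 q.2 else 0)


private lemma sum_ite_pull {M : Type*} [AddCommMonoid M] (c : Prop) [Decidable c] {ι : Type*}
    (s : Finset ι) (f : ι → M) :
    (∑ x ∈ s, if c then f x else 0) = if c then ∑ x ∈ s, f x else 0 := by
  split_ifs <;> simp

private lemma sumIte_eq {M : Type*} [AddCommMonoid M] {n : ℕ} (j : ℕ) (f : Fin n → M) :
    (∑ q : Fin n, if (q : ℕ) = j then f q else 0) = if h : j < n then f ⟨j, h⟩ else 0 := by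
  split_ifs with h
  · rw [Finset.sum_eq_single ⟨j, h⟩]
    · simp
    · exact fun q _ hq => if_neg fun hc => hq (Fin.ext hc)
    · simp
  · refine Finset.sum_eq_zero fun q _ => if_neg fun hc => h ?_
    exact hc ▸ q.isLt

private lemma sumIte_eq' {M : Type*} [AddCommMonoid M] {n : ℕ} (j : ℕ) (f : Fin n → M) :
    (∑ q : Fin n, if j = (q : ℕ) then f q else 0) = if h : j < n then f ⟨j, h⟩ else 0 := by
  rw [show (∑ q : Fin n, if j = (q : ℕ) then f q else 0)
      = ∑ q : Fin n, if (q : ℕ) = j then f q else 0 from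
    Finset.sum_congr rfl fun q _ => if_congr eq_comm rfl rfl, sumIte_eq]

private lemma sumIte_succ {M : Type*} [AddCommMonoid M] {n : ℕ} (j : ℕ) (f : Fin n → M) :
    (∑ q : Fin n, if j = (q : ℕ) + 1 then f q else 0) =
      if h : 1 ≤ j ∧ j - 1 < n then f ⟨j - 1, h.2⟩ else 0 := by
  split_ifs with h
  · rw [Finset.sum_eq_single ⟨j - 1, h.2⟩]
    · rw [if_pos (show j = ((⟨j - 1, h.2⟩ : Fin n) : ℕ) + 1 from by
        show j = j - 1 + 1; omega)]
    · intro q _ hq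
      refine if_neg fun hc => hq (Fin.ext ?_)
      show (q : ℕ) = j - 1
      omega
    · simp
  · refine Finset.sum_eq_zero fun q _ => if_neg fun hc => ?_
    exact h ⟨by omega, by have := q.isLt; omega⟩

/-- The auxiliary sequence `ψ_0 = z⁻¹ ψ_n`, `ψ_k = Ψ_{k-1}` for `1 ≤ k ≤ n`,
`ψ_k = z ψ_1` for `k > n`. -/
noncomputable def psiAux (m n : ℕ) (z : ℂ) (Ψ : Fin n × Fin m → ℂ) (hn0 : 0 < n) :
    ℕ → Fin m → ℂ := fun k a =>
  if hk : k = 0 then z⁻¹ * Ψ (⟨n - 1, by omega⟩, a)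
  else if h : k ≤ n then Ψ (⟨k - 1, by omega⟩, a)
  else z * Ψ (⟨0, hn0⟩, a)

private lemma psiAux_zero (m n : ℕ) (z : ℂ) (Ψ : Fin n × Fin m → ℂ) (hn0 : 0 < n) (a : Fin m) :
    psiAux m n z Ψ hn0 0 a = z⁻¹ * Ψ (⟨n - 1, by omega⟩, a) := by
  simp [psiAux]

private lemma psiAux_succ (m n : ℕ) (z : ℂ) (Ψ : Fin n × Fin m → ℂ) (hn0 : 0 < n)
    {k : ℕ} (h : k < n) (a : Fin m) :
    psiAux m n z Ψ hn0 (k + 1) a = Ψ (⟨k, h⟩, a) := by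
  rw [psiAux, dif_neg (by omega), dif_pos (by omega : k + 1 ≤ n)]
  exact congrArg Ψ (by rw [Prod.mk.injEq]; exact ⟨Fin.ext (by simp), rfl⟩)

private lemma psiAux_top (m n : ℕ) (z : ℂ) (Ψ : Fin n × Fin m → ℂ) (hn0 : 0 < n)
    {k : ℕ} (h : n < k) (a : Fin m) :
    psiAux m n z Ψ hn0 k a = z * Ψ (⟨0, hn0⟩, a) := by
  rw [psiAux, dif_neg (by omega), dif_neg (by omega)]

/-- If `M(z) Ψ = 0` with `Ψ = (ψ_1, …, ψ_n)`, then the transfer matrix satisfies the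
eigenvalue equation `T (ψ_1, z⁻¹ ψ_n)ᵀ = z (ψ_1, z⁻¹ ψ_n)ᵀ`. -/
theorem transfer_eigen_of_cornerMat_null (m n : ℕ) (hm : 1 ≤ m) (hn : 2 ≤ n)
    (A B C : ℕ → Matrix (Fin m) (Fin m) ℂ)
    (hB : ∀ i, 1 ≤ i → i ≤ n → IsUnit (B i))
    (hC : ∀ i, i < n → IsUnit (C i))
    (z : ℂ) (hz : z ≠ 0)
    (Ψ : Fin n × Fin m → ℂ)
    (hΨ : cornerMat m n z A B C *ᵥ Ψ = 0) :
    transfer m A B C n *ᵥ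
        Sum.elim (fun a => Ψ (⟨0, by omega⟩, a)) (fun a => z⁻¹ * Ψ (⟨n - 1, by omega⟩, a)) =
      z • Sum.elim (fun a => Ψ (⟨0, by omega⟩, a))
            (fun a => z⁻¹ * Ψ (⟨n - 1, by omega⟩, a)) := by
  have hn0 : 0 < n := by omega
  set ψ := psiAux m n z Ψ hn0 with hψdef
  -- the row equations of `M(z) Ψ = 0`
  have master : ∀ (p : Fin n) (a : Fin m),
      (∑ b, A (↑p + 1) a b * Ψ (p, b))
      + (if h : (p : ℕ) + 1 < n then ∑ b, B (↑p + 1) a b * Ψ (⟨↑p + 1, h⟩, b) else 0)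
      + (if h : 1 ≤ (p : ℕ) ∧ (p : ℕ) - 1 < n then ∑ b, C ↑p a b * Ψ (⟨↑p - 1, h.2⟩, b) else 0)
      + (if (p : ℕ) = 0 then ∑ b, z⁻¹ * C 0 a b * Ψ (⟨n - 1, by omega⟩, b) else 0)
      + (if (p : ℕ) = n - 1 then ∑ b, z * B n a b * Ψ (⟨0, hn0⟩, b) else 0) = 0 := by
    intro p a
    have h := congrFun hΨ (p, a)
    simp only [mulVec, dotProduct, Fintype.sum_prod_type, Pi.zero_apply, cornerMat,
      add_mul, ite_mul, zero_mul, Finset.sum_add_distrib, ite_and, sum_ite_pull,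
      Finset.sum_const_zero, sumIte_eq, sumIte_eq', sumIte_succ] at h
    rw [dif_pos p.isLt, Fin.eta, dif_pos (show n - 1 < n by omega),
      dif_pos hn0] at h
    exact h
  -- the key recursion : B_{k+1} ψ_{k+2} = -(A_{k+1} ψ_{k+1}) - C_k ψ_k
  have key : ∀ k, k < n →
      B (k + 1) *ᵥ ψ (k + 2) = -(A (k + 1) *ᵥ ψ (k + 1)) - C k *ᵥ ψ k := by
    intro k hk
    funext a
    have hM := master ⟨k, hk⟩ a
    simp only [Fin.val_mk] at hM
    simp only [Pi.sub_apply, Pi.neg_apply, mulVec, dotProduct, hψdef]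
    by_cases hk0 : k = 0
    · subst hk0
      rw [dif_pos (by omega), dif_neg (by omega), if_pos rfl, if_neg (by omega)] at hM
      simp only [psiAux_succ m n z Ψ hn0 (show 1 < n by omega),
        psiAux_succ m n z Ψ hn0 (show 0 < n by omega), psiAux_zero]
      have e3 : (∑ b, C 0 a b * (z⁻¹ * Ψ (⟨n - 1, by omega⟩, b)))
          = ∑ b, z⁻¹ * C 0 a b * Ψ (⟨n - 1, by omega⟩, b) :=
        Finset.sum_congr rfl fun b _ => by ring
      rw [e3]
      linear_combination hM
    · by_cases hk1 : k = n - 1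
      · subst hk1
        rw [dif_neg (by omega), dif_pos (by omega), if_neg (by omega), if_pos rfl] at hM
        simp only [show n - 1 + 2 = n + 1 from by omega, show n - 1 + 1 = n from by omega] at hM ⊢
        simp only [psiAux_top m n z Ψ hn0 (show n < n + 1 by omega),
          psiAux_succ m n z Ψ hn0 (show n - 1 < n by omega) ,
          psiAux_succ m n z Ψ hn0 (show n - 1 - 1 < n by omega)]
        have hpsn : ∀ b, psiAux m n z Ψ hn0 n b = Ψ (⟨n - 1, by omega⟩, b) := fun b => by
          rw [psiAux, dif_neg (by omega), dif_pos (le_refl n)]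
        have hpsn1 : ∀ b, psiAux m n z Ψ hn0 (n - 1) b = Ψ (⟨n - 1 - 1, by omega⟩, b) :=
          fun b => by rw [psiAux, dif_neg (by omega), dif_pos (by omega)]
        have e2 : (∑ x, B n a x * (z * Ψ (⟨0, hn0⟩, x)))
            = ∑ x, z * B n a x * Ψ (⟨0, hn0⟩, x) :=
          Finset.sum_congr rfl fun b _ => by ring
        simp only [hpsn, hpsn1]
        rw [e2]
        linear_combination hM
      · rw [dif_pos (by omega), dif_pos (by omega), if_neg hk0, if_neg hk1] at hM
        simp only [psiAux_succ m n z Ψ hn0 (show k + 1 < n by omega),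
          psiAux_succ m n z Ψ hn0 hk]
        have hψk : ∀ b, ψ k b = Ψ (⟨k - 1, by omega⟩, b) := by
          intro b
          rw [hψdef, psiAux, dif_neg hk0, dif_pos (by omega)]
        simp only [hψdef] at hψk
        simp only [hψk]
        linear_combination hM
  -- transfer matrix recursion
  have trans : ∀ k, k ≤ n →
      transfer m A B C k *ᵥ Sum.elim (ψ 1) (ψ 0) = Sum.elim (ψ (k + 1)) (ψ k) := by
    intro k
    induction k with
    | zero => intro _; simp [transfer, Matrix.one_mulVec]
    | succ k ih =>
      intro hk1
      have hk : k < n := by omega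
      have hdet : IsUnit (B (k + 1)).det :=
        (Matrix.isUnit_iff_isUnit_det _).mp (hB (k + 1) (by omega) (by omega))
      rw [transfer, ← Matrix.mulVec_mulVec, ih (by omega), fromBlocks_mulVec]
      have htop : (-(B (k + 1))⁻¹ * A (k + 1)) *ᵥ
            (Sum.elim (ψ (k + 1)) (ψ k) ∘ Sum.inl)
          + (-(B (k + 1))⁻¹ * C k) *ᵥ (Sum.elim (ψ (k + 1)) (ψ k) ∘ Sum.inr)
          = ψ (k + 2) := by
        rw [Sum.elim_comp_inl, Sum.elim_comp_inr]
        have : (-(B (k + 1))⁻¹ * A (k + 1)) *ᵥ ψ (k + 1)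
            + (-(B (k + 1))⁻¹ * C k) *ᵥ ψ k
            = (B (k + 1))⁻¹ *ᵥ (B (k + 1) *ᵥ ψ (k + 2)) := by
          rw [key k hk]
          simp only [neg_mul, neg_mulVec, ← Matrix.mulVec_mulVec, Matrix.mulVec_sub,
            Matrix.mulVec_neg, Matrix.mulVec_add, sub_eq_add_neg, neg_neg]
        rw [this, Matrix.mulVec_mulVec, Matrix.nonsing_inv_mul _ hdet, Matrix.one_mulVec]
      have hbot : (1 : Matrix (Fin m) (Fin m) ℂ) *ᵥ
            (Sum.elim (ψ (k + 1)) (ψ k) ∘ Sum.inl)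
          + (0 : Matrix (Fin m) (Fin m) ℂ) *ᵥ (Sum.elim (ψ (k + 1)) (ψ k) ∘ Sum.inr)
          = ψ (k + 1) := by
        rw [Sum.elim_comp_inl, Sum.elim_comp_inr, Matrix.one_mulVec, Matrix.zero_mulVec,
          add_zero]
      rw [htop, hbot]
  -- conclude
  have hv : Sum.elim (fun a => Ψ (⟨0, by omega⟩, a))
      (fun a => z⁻¹ * Ψ (⟨n - 1, by omega⟩, a)) = Sum.elim (ψ 1) (ψ 0) := by
    funext x
    cases x with
    | inl a => simp [psiAux_succ m n z Ψ hn0 hn0 a, hψdef]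
    | inr a => simp [psiAux_zero, hψdef]
  rw [hv, trans n (le_refl n)]
  funext x
  cases x with
  | inl a =>
    simp only [Sum.elim_inl, Pi.smul_apply, smul_eq_mul, hψdef,
      psiAux_top m n z Ψ hn0 (show n < n + 1 by omega),
      psiAux_succ m n z Ψ hn0 hn0]
  | inr a =>
    simp only [Sum.elim_inr, Pi.smul_apply, smul_eq_mul, hψdef, psiAux_zero]
    have : ψ n a = Ψ (⟨n - 1, by omega⟩, a) := by
      rw [hψdef, psiAux, dif_neg (by omega), dif_pos (le_refl n)]
    simp only [hψdef] at this
    rw [this, ← mul_assoc, mul_inv_cancel₀ hz, one_mul]
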